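/- Let V = GF(4)³ with the standard non-degenerate hermitian form h(x,y) = x₁ȳ₁ + x₂ȳ₂ + x₃ȳ₃ (where ȳ = y²), and s(x,y) = h(x,y) + h(y,x). Define the graph Γ on V₁ = {x : h(x,x) = 1} with distinct u, v adjacent iff s(u,v) = 0. Then Γ is a strongly regular graph with parameters (36, 15, 6, 6). -/

import Mathlib

structure F4 where
  a : ZMod 2
  b : ZMod 2
deriving DecidableEq, Fintype

namespace F4

instance : Zero F4 := ⟨⟨0, 0⟩⟩
instance : One F4 := ⟨⟨1, 0⟩⟩
instance : Add F4 := ⟨fun x y => ⟨x.a + y.a, x.b + y.b⟩⟩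
instance : Neg F4 := ⟨fun x => x⟩
instance : Mul F4 := ⟨fun x y => ⟨x.a * y.a + x.b * y.b, x.a * y.b + x.b * y.a + x.b * y.b⟩⟩
instance : Inv F4 := ⟨fun x => x * x⟩

instance : CommRing F4 where
  add_assoc := by decide
  zero_add := by decide
  add_zero := by decide
  add_comm := by decide
  mul_assoc := by decide
  one_mul := by decide
  mul_one := by decide
  left_distrib := by decide
  right_distrib := by decide
  zero_mul := by decide
  mul_zero := by decide
  mul_comm := by decide
  neg_add_cancel := by decide
  nsmul := nsmulRec
  zsmul := zsmulRec

instance : Field F4 where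
  exists_pair_ne := ⟨0, 1, by decide⟩
  mul_inv_cancel := by decide
  inv_zero := by decide
  nnqsmul := _
  qsmul := _

end F4

def hermF4 (x y : Fin 3 → F4) : F4 := ∑ i, x i * (y i) ^ 2

def G4 : SimpleGraph {x : Fin 3 → F4 // hermF4 x x = 1} where
  Adj u v := u ≠ v ∧ hermF4 u.1 v.1 + hermF4 v.1 u.1 = 0
  symm := by
    constructor
    rintro u v ⟨h1, h2⟩; exact ⟨h1.symm, by rwa [add_comm]⟩
  loopless := ⟨fun u h => h.1 rfl⟩

instance : DecidableRel G4.Adj := fun u v => inferInstanceAs (Decidable (u ≠ v ∧ hermF4 u.1 v.1 + hermF4 v.1 u.1 = 0))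

set_option maxRecDepth 1000000 in
theorem g4_card : Fintype.card {x : Fin 3 → F4 // hermF4 x x = 1} = 36 := by decide

set_option maxRecDepth 1000000 in
set_option maxHeartbeats 12000000 in
theorem g4_regular : G4.IsRegularOfDegree 15 := by
  show ∀ v, G4.degree v = 15
  decide

set_option maxRecDepth 1000000 in
set_option maxHeartbeats 12000000 in
theorem g4_of_adj : ∀ v w, G4.Adj v w → Fintype.card (G4.commonNeighbors v w) = 6 := by decide

set_option maxRecDepth 1000000 in
set_option maxHeartbeats 12000000 in
theorem g4_of_not_adj :
    ∀ v w, v ≠ w → ¬G4.Adj v w → Fintype.card (G4.commonNeighbors v w) = 6 := by decide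

theorem g4_srg : G4.IsSRGWith 36 15 6 6 :=
  ⟨g4_card, g4_regular, g4_of_adj, fun _ _ h h' => g4_of_not_adj _ _ h h'⟩

theorem isSRGWith_of_iso {V W : Type*} [Fintype V] [Fintype W]
    {G : SimpleGraph V} {H : SimpleGraph W} [DecidableRel G.Adj] [DecidableRel H.Adj]
    (e : G ≃g H) {n k l m : ℕ} (h : G.IsSRGWith n k l m) : H.IsSRGWith n k l m := by
  have hcard : ∀ v w : W, Fintype.card (H.commonNeighbors v w) =
      Fintype.card (G.commonNeighbors (e.symm v) (e.symm w)) := by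
    intro v w
    apply Fintype.card_congr
    refine Equiv.subtypeEquiv e.symm.toEquiv fun x => ?_
    simp only [SimpleGraph.mem_commonNeighbors]
    rw [← e.symm.map_adj_iff, ← e.symm.map_adj_iff]
    rfl
  refine ⟨?_, ?_, ?_, ?_⟩
  · rw [← h.card]; exact Fintype.card_congr e.toEquiv.symm
  · intro v
    rw [← SimpleGraph.card_neighborSet_eq_degree,
      Fintype.card_congr (e.symm.mapNeighborSet v), SimpleGraph.card_neighborSet_eq_degree]
    exact h.regular _
  · intro v w hadj
    rw [hcard]
    exact h.of_adj _ _ (e.symm.map_adj_iff.mpr hadj)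
  · intro v w hne hnadj
    rw [hcard]
    refine h.of_not_adj (fun hh => hne ?_) (fun hh => hnadj (e.symm.map_adj_iff.mp hh))
    simpa using congrArg e hh

/-- The standard non-degenerate hermitian form on `GF(4)³`, with conjugation `a ↦ a ^ 2`. -/
noncomputable def hermForm (x y : Fin 3 → GaloisField 2 2) : GaloisField 2 2 :=
  ∑ i, x i * (y i) ^ 2

/-- The associated `GF(2)`-alternating form `s(x,y) = h(x,y) + h(y,x)`. -/
noncomputable def altForm (x y : Fin 3 → GaloisField 2 2) : GaloisField 2 2 :=
  hermForm x y + hermForm y x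

/-- The set of vectors `x` with `h(x,x) = 1`. -/
def unitVectors : Set (Fin 3 → GaloisField 2 2) :=
  {x | hermForm x x = 1}

/-- The graph `Γ` on `V₁ = {x : h(x,x) = 1}`, where distinct `u, v` are adjacent iff
`s(u,v) = 0`. -/
def unitGraph : SimpleGraph unitVectors where
  Adj u v := u ≠ v ∧ altForm u.1 v.1 = 0
  symm := by
    constructor
    rintro u v ⟨hne, hs⟩
    exact ⟨hne.symm, by rwa [altForm, add_comm]⟩
  loopless := ⟨fun u h => h.1 rfl⟩

noncomputable instance : Fintype (GaloisField 2 2) := Fintype.ofFinite _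

noncomputable instance : Fintype unitVectors := Fintype.ofFinite _

noncomputable def e4 : F4 ≃+* GaloisField 2 2 :=
  FiniteField.ringEquivOfCardEq (by
    have h1 : Nat.card (GaloisField 2 2) = 4 := GaloisField.card 2 2 (by norm_num)
    rw [← Nat.card_eq_fintype_card, ← Nat.card_eq_fintype_card, h1, Nat.card_eq_fintype_card]
    decide)

noncomputable def eπ : (Fin 3 → F4) ≃ (Fin 3 → GaloisField 2 2) :=
  Equiv.piCongrRight fun _ => e4.toEquiv

theorem herm_map (x y : Fin 3 → F4) : hermForm (eπ x) (eπ y) = e4 (hermF4 x y) := by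
  simp [hermForm, hermF4, eπ, map_sum]

noncomputable def graphIso : G4 ≃g unitGraph where
  toEquiv := Equiv.subtypeEquiv eπ fun x => by
    constructor
    · intro h
      show hermForm (eπ x) (eπ x) = 1
      rw [herm_map, h, map_one]
    · intro h
      have : e4 (hermF4 x x) = e4 1 := by rw [map_one, ← herm_map]; exact h
      exact e4.injective this
  map_rel_iff' := by
    rintro ⟨u, hu⟩ ⟨v, hv⟩
    show (_ ≠ _ ∧ altForm (eπ u) (eπ v) = 0) ↔ _
    constructor
    · rintro ⟨hne, hs⟩
      refine ⟨fun hh => hne (by rw [hh]), ?_⟩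
      have : e4 (hermF4 u v + hermF4 v u) = e4 0 := by
        rw [map_zero, map_add, ← herm_map, ← herm_map]; exact hs
      exact e4.injective this
    · rintro ⟨hne, hs⟩
      refine ⟨fun hh => hne ?_, ?_⟩
      · have := congrArg Subtype.val hh
        simp only [Equiv.subtypeEquiv_apply] at this
        exact Subtype.ext (eπ.injective this)
      · show altForm (eπ u) (eπ v) = 0
        rw [altForm, herm_map, herm_map, ← map_add, hs, map_zero]

open scoped Classical in
/-- The graph `Γ` on the `36` vectors of `GF(4)³` with `h(x,x) = 1`, with adjacency
`s(u,v) = 0`, is a strongly regular graph with parameters `(36, 15, 6, 6)`. -/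
theorem unitGraph_isSRGWith : unitGraph.IsSRGWith 36 15 6 6 :=
  isSRGWith_of_iso graphIso g4_srg
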